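/- (Mossel's reduction lemma) Let δ₀ : (0,1] → (0,1] be a function such that for every n ≥ 1, every GSWF F on three alternatives with n voters satisfying the IIA condition, and every ε ∈ (0,1], P(F) ≤ δ₀(ε) implies D_1(F) ≤ ε. Then for every k ≥ 3, every n ≥ 1, every GSWF F on k alternatives with n voters satisfying the IIA condition, and every ε ∈ (0,1], P(F) ≤ δ₀(ε/k²) implies D_1(F) ≤ ε. -/

import Mathlib

open Finset

noncomputable section

/-- The discrete cube `{0,1}^n`. -/
abbrev Cube (n : ℕ) := Fin n → Bool

/-- Inner product of real-valued functions on the cube w.r.t. the uniform measure. -/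
def cInner (n : ℕ) (f g : Cube n → ℝ) : ℝ :=
  (∑ x : Cube n, f x * g x) / 2 ^ n

/-- Expectation w.r.t. the uniform measure on the cube. -/
def cExp (n : ℕ) (f : Cube n → ℝ) : ℝ :=
  (∑ x : Cube n, f x) / 2 ^ n

/-- The Walsh character `r_S`. -/
def walsh (n : ℕ) (S : Finset (Fin n)) : Cube n → ℝ :=
  fun x => ∏ i ∈ S, (2 * (if x i then (1 : ℝ) else 0) - 1)

/-- Fourier–Walsh coefficient of `f` at `S`. -/
def fcoef (n : ℕ) (f : Cube n → ℝ) (S : Finset (Fin n)) : ℝ :=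
  cInner n f (walsh n S)

/-- Real-valued version of a Boolean function. -/
def BR (n : ℕ) (f : Cube n → Bool) : Cube n → ℝ :=
  fun x => if f x then 1 else 0

/-- Membership in `G_2(n)`: constant functions, dictatorships and anti-dictatorships. -/
def IsG2 (n : ℕ) (G : Cube n → Bool) : Prop :=
  (∃ b, ∀ x, G x = b) ∨ (∃ m, ∀ x, G x = x m) ∨ (∃ m, ∀ x, G x = !(x m))

/-- `Pr[f ≠ G]` over the uniform measure on the cube. -/
def distB (n : ℕ) (f G : Cube n → Bool) : ℝ :=
  (Nat.card {x : Cube n // f x ≠ G x} : ℝ) / 2 ^ n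

/-- The vector of individual preferences between alternatives `i` and `j`
induced by the profile `σ` (voter `v` prefers `i` over `j` iff `σ v i < σ v j`). -/
def prefInput (k n : ℕ) (σ : Fin n → Equiv.Perm (Fin k)) (i j : Fin k) : Cube n :=
  fun v => decide (σ v i < σ v j)

/-- The outcome of the IIA GSWF `F` on the profile `σ` is transitive, i.e. the
pairwise preferences coincide with those of some linear order `π`. -/
def TransOutcome (k n : ℕ) (F : Fin k → Fin k → Cube n → Bool)
    (σ : Fin n → Equiv.Perm (Fin k)) : Prop :=
  ∃ π : Equiv.Perm (Fin k), ∀ i j : Fin k, i < j →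
    F i j (prefInput k n σ i j) = decide (π i < π j)

/-- Probability of a non-transitive outcome for a uniformly random profile. -/
def PFk (k n : ℕ) (F : Fin k → Fin k → Cube n → Bool) : ℝ :=
  (Nat.card {σ : Fin n → Equiv.Perm (Fin k) // ¬ TransOutcome k n F σ} : ℝ)
    / (Nat.factorial k : ℝ) ^ n

/-- `Pr[F ≠ G]`: the probability, over a uniform profile, that the vectors of
pairwise outcomes of `F` and `G` differ. -/
def distk (k n : ℕ) (F G : Fin k → Fin k → Cube n → Bool) : ℝ :=
  (Nat.card {σ : Fin n → Equiv.Perm (Fin k) //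
      ∃ i j : Fin k, i < j ∧
        F i j (prefInput k n σ i j) ≠ G i j (prefInput k n σ i j)} : ℝ)
    / (Nat.factorial k : ℝ) ^ n

/-- `D_1(F) = min_{G ∈ F_k(n)} Pr[F ≠ G]`. -/
def D1k (k n : ℕ) (F : Fin k → Fin k → Cube n → Bool) : ℝ :=
  sInf { r : ℝ | ∃ G : Fin k → Fin k → Cube n → Bool,
    (∀ σ, TransOutcome k n G σ) ∧ r = distk k n F G }

/-! ### Auxiliary machinery for Mossel's reduction lemma -/

section MosselAux

open Finset

/-- "not all equal" for three booleans -/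
def nae (a b c : Bool) : Prop := ¬(a = b ∧ b = c)

instance (a b c : Bool) : Decidable (nae a b c) := by unfold nae; infer_instance

/-- transitivity pattern for a triple of pairwise boolean outcomes -/
def Ok (a b c : Bool) : Prop :=
  ¬(a = true ∧ b = false ∧ c = true) ∧ ¬(a = false ∧ b = true ∧ c = false)

instance (a b c : Bool) : Decidable (Ok a b c) := by unfold Ok; infer_instance

/-- dictator (s = false) / anti-dictator (s = true) of voter `m` -/
def dict (n : ℕ) (m : Fin n) (s : Bool) : Cube n → Bool := fun x => xor (x m) s

def NaeP (n : ℕ) (f p h : Cube n → Bool) : Prop :=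
  ∀ x u z : Cube n, (∀ v, nae (x v) (u v) (z v)) → nae (f x) (p u) (h z)

def PropR (n : ℕ) (f : Cube n → Bool) : Prop :=
  ∀ x u z : Cube n, (∀ v, x v = u v ∨ u v ≠ z v) → (f x = f u ∨ f u ≠ f z)

variable {n : ℕ}

lemma nae_mid (a c : Bool) : nae a (!a) c := by revert a c; decide

lemma naeP_swap12 {f p h : Cube n → Bool} (H : NaeP n f p h) : NaeP n p f h := by
  intro x u z hpt
  have := H u x z (fun v => by have := hpt v; revert this; unfold nae; cases x v <;> cases u v <;> cases z v <;> simp)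
  revert this; unfold nae; cases f u <;> cases p x <;> cases h z <;> simp

lemma naeP_swap23 {f p h : Cube n → Bool} (H : NaeP n f p h) : NaeP n f h p := by
  intro x u z hpt
  have := H x z u (fun v => by have := hpt v; revert this; unfold nae; cases x v <;> cases u v <;> cases z v <;> simp)
  revert this; unfold nae; cases f x <;> cases p z <;> cases h u <;> simp

lemma naeP_const {f p h : Cube n → Bool} (H : NaeP n f p h) (b : Bool)
    (hp : ∀ u, p u = b) : (∀ x, f x = !b) ∨ (∀ z, h z = !b) := by
  by_contra hc
  push_neg at hc
  obtain ⟨⟨x, hx⟩, ⟨z, hz⟩⟩ := hc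
  have hfx : f x = b := by cases hfb : f x <;> cases b <;> simp_all
  have hhz : h z = b := by cases hfb : h z <;> cases b <;> simp_all
  have := H x (fun v => !(x v)) z (fun v => nae_mid _ _)
  rw [hfx, hhz, hp] at this
  exact this ⟨rfl, rfl⟩

lemma naeP_link {f p h : Cube n → Bool} (H : NaeP n f p h)
    (hpnc : ¬ ∃ b, ∀ u, p u = b) : ∀ x, h (fun v => !(x v)) = ! f x := by
  intro x
  by_contra hne
  have heq : h (fun v => !(x v)) = f x := by
    cases h1 : h (fun v => !(x v)) <;> cases h2 : f x <;> simp_all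
  apply hpnc
  refine ⟨!(f x), fun u => ?_⟩
  have := H x u (fun v => !(x v)) (fun v => by
    have : ∀ a b : Bool, nae a b (!a) := by decide
    exact this _ _)
  rw [heq] at this
  cases hpu : p u <;> cases hfx : f x <;> simp_all [nae]

lemma exists_edge {f : Cube n → Bool} (hnc : ¬ ∃ b, ∀ x, f x = b) :
    ∃ (u : Cube n) (m : Fin n), f (Function.update u m (!(u m))) ≠ f u := by
  obtain ⟨a, b, hab⟩ : ∃ a b, f a ≠ f b := by
    by_contra hc; push_neg at hc
    exact hnc ⟨f (fun _ => false), fun x => hc x _⟩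
  have key : ∀ s : Finset (Fin n), ∀ a b : Cube n, (∀ v, v ∉ s → a v = b v) → f a ≠ f b →
      ∃ (u : Cube n) (m : Fin n), f (Function.update u m (!(u m))) ≠ f u := by
    intro s
    induction s using Finset.induction_on with
    | empty =>
      intro a b hout hne
      exact absurd (congrArg f (funext fun v => hout v (by simp))) hne
    | @insert m s' hm ih =>
      intro a b hout hne
      by_cases hab' : a m = b m
      · exact ih a b (fun v hv => by
          by_cases hvm : v = m
          · subst hvm; exact hab'
          · exact hout v (by simp [hvm, hv])) hne
      · set a' := Function.update a m (b m) with ha'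
        by_cases hfa : f a' = f a
        · refine ih a' b (fun v hv => ?_) (by rw [hfa]; exact hne)
          by_cases hvm : v = m
          · subst hvm; simp [ha']
          · rw [ha', Function.update_of_ne hvm]; exact hout v (by simp [hvm, hv])
        · refine ⟨a, m, ?_⟩
          have hbm : (!(a m)) = b m := by cases h1 : a m <;> cases h2 : b m <;> simp_all
          rw [hbm]; exact hfa
  exact key Finset.univ a b (fun v hv => absurd (Finset.mem_univ v) hv) hab

lemma propR_dict {f : Cube n → Bool} (hR : PropR n f)
    (u : Cube n) (m : Fin n) (hedge : f (Function.update u m (!(u m))) ≠ f u) :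
    ∀ x, f x = xor (x m) (xor (u m) (f u)) := by
  set u' := Function.update u m (!(u m)) with hu'
  have hum' : u' m = !(u m) := by rw [hu']; simp
  have huv : ∀ v, v ≠ m → u' v = u v := fun v hv => by rw [hu', Function.update_of_ne hv]
  have main : ∀ x : Cube n, (x m = u m → f x = f u) ∧ (x m ≠ u m → f x ≠ f u) := by
    intro x
    constructor
    · intro hxm
      by_contra hfx
      have hcon := hR u x u' (fun v => by
        by_cases hvm : v = m
        · subst hvm; left; exact hxm.symm
        · rcases eq_or_ne (u v) (x v) with h | h
          · exact Or.inl h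
          · right; rw [huv v hvm]; exact fun hh => h hh.symm)
      rcases hcon with h1 | h2
      · exact hfx h1.symm
      · have : f u' = f u := by
          cases e1 : f x <;> cases e2 : f u <;> cases e3 : f u' <;> simp_all
        exact hedge this
    · intro hxm
      have hcon := hR u' u x (fun v => by
        by_cases hvm : v = m
        · subst hvm; right; exact fun hh => hxm hh.symm
        · exact Or.inl (huv v hvm))
      rcases hcon with h1 | h2
      · exact absurd h1 hedge
      · exact fun hh => h2 hh.symm
  intro x
  rcases eq_or_ne (x m) (u m) with h | h
  · rw [(main x).1 h, h]; cases u m <;> cases f u <;> rfl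
  · have hfne := (main x).2 h
    have hx : x m = !(u m) := by cases h1 : x m <;> cases h2 : u m <;> simp_all
    have hf : f x = !(f u) := by cases h1 : f x <;> cases h2 : f u <;> simp_all
    rw [hf, hx]; cases u m <;> cases f u <;> rfl

theorem naeP_classify {f p h : Cube n → Bool} (H : NaeP n f p h) :
    (∃ m s, (∀ x, f x = dict n m s x) ∧ (∀ x, p x = dict n m s x) ∧ (∀ x, h x = dict n m s x))
    ∨ (∃ b, (∀ x, f x = b) ∧ (∀ u, p u = !b))
    ∨ (∃ b, (∀ x, f x = b) ∧ (∀ z, h z = !b))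
    ∨ (∃ b, (∀ u, p u = b) ∧ (∀ z, h z = !b)) := by
  by_cases hp : ∃ b, ∀ u, p u = b
  · obtain ⟨b, hb⟩ := hp
    rcases naeP_const H b hb with hf | hh
    · exact Or.inr (Or.inl ⟨!b, hf, by simpa using hb⟩)
    · exact Or.inr (Or.inr (Or.inr ⟨b, hb, hh⟩))
  by_cases hf : ∃ b, ∀ x, f x = b
  · obtain ⟨b, hb⟩ := hf
    rcases naeP_const (naeP_swap12 H) b hb with hp' | hh
    · exact Or.inr (Or.inl ⟨b, hb, hp'⟩)
    · exact Or.inr (Or.inr (Or.inl ⟨b, hb, hh⟩))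
  by_cases hh : ∃ b, ∀ z, h z = b
  · obtain ⟨b, hb⟩ := hh
    rcases naeP_const (naeP_swap23 H) b hb with hf' | hp'
    · exact Or.inr (Or.inr (Or.inl ⟨!b, hf', by simpa using hb⟩))
    · exact Or.inr (Or.inr (Or.inr ⟨!b, hp', by simpa using hb⟩))
  have hlink_h : ∀ x, h (fun v => !(x v)) = ! f x := naeP_link H hp
  have hlink_p : ∀ x, p (fun v => !(x v)) = ! f x := naeP_link (naeP_swap23 H) hh
  have hR : PropR n f := by
    intro x u z hpt
    have key := H x (fun v => !(u v)) (fun v => !(z v)) (fun v => by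
      have : ∀ a b c : Bool, (a = b ∨ b ≠ c) → nae a (!b) (!c) := by decide
      exact this _ _ _ (hpt v))
    rw [hlink_p u, hlink_h z] at key
    revert key
    have : ∀ a b c : Bool, nae a (!b) (!c) → (a = b ∨ b ≠ c) := by decide
    exact this _ _ _
  obtain ⟨u, m, hedge⟩ := exists_edge hf
  have hfd := propR_dict hR u m hedge
  set s := xor (u m) (f u) with hs
  have hneg : ∀ z : Cube n, (fun v => !((fun w => !(z w)) v)) = z := by
    intro z; funext v; simp
  have hpd : ∀ z, p z = xor (z m) s := by
    intro z
    have := hlink_p (fun v => !(z v))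
    rw [hneg z] at this
    rw [this, hfd]
    cases z m <;> cases s <;> rfl
  have hhd : ∀ z, h z = xor (z m) s := by
    intro z
    have := hlink_h (fun v => !(z v))
    rw [hneg z] at this
    rw [this, hfd]
    cases z m <;> cases s <;> rfl
  exact Or.inl ⟨m, s, fun x => hfd x, hpd, hhd⟩

lemma ok_perm : ∀ π : Equiv.Perm (Fin 3),
    Ok (decide (π 0 < π 1)) (decide (π 0 < π 2)) (decide (π 1 < π 2)) := by decide

lemma ok_surj : ∀ a b c : Bool, Ok a b c → ∃ τ : Equiv.Perm (Fin 3),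
    decide (τ 0 < τ 1) = a ∧ decide (τ 0 < τ 2) = b ∧ decide (τ 1 < τ 2) = c := by decide

theorem classify3 {G : Fin 3 → Fin 3 → Cube n → Bool} (htr : ∀ σ, TransOutcome 3 n G σ) :
    (∃ m s, (∀ x, G 0 1 x = dict n m s x) ∧ (∀ x, G 0 2 x = dict n m s x) ∧ (∀ x, G 1 2 x = dict n m s x))
    ∨ ((∀ x, G 0 1 x = true) ∧ (∀ x, G 0 2 x = true))
    ∨ ((∀ x, G 0 1 x = false) ∧ (∀ x, G 0 2 x = false))
    ∨ ((∀ x, G 0 1 x = false) ∧ (∀ x, G 1 2 x = true))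
    ∨ ((∀ x, G 0 1 x = true) ∧ (∀ x, G 1 2 x = false))
    ∨ ((∀ x, G 0 2 x = true) ∧ (∀ x, G 1 2 x = true))
    ∨ ((∀ x, G 0 2 x = false) ∧ (∀ x, G 1 2 x = false)) := by
  set f : Cube n → Bool := G 0 1 with hfdef
  set g : Cube n → Bool := G 0 2 with hgdef
  set h : Cube n → Bool := G 1 2 with hhdef
  set p : Cube n → Bool := fun u => !(g (fun v => !(u v))) with hpdef
  have hok : ∀ x y z : Cube n, (∀ v, Ok (x v) (y v) (z v)) → Ok (f x) (g y) (h z) := by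
    intro x y z hpt
    have hch : ∀ v, ∃ τ : Equiv.Perm (Fin 3),
        decide (τ 0 < τ 1) = x v ∧ decide (τ 0 < τ 2) = y v ∧ decide (τ 1 < τ 2) = z v :=
      fun v => ok_surj _ _ _ (hpt v)
    choose σ hσ using hch
    have hx : prefInput 3 n σ 0 1 = x := funext fun v => (hσ v).1
    have hy : prefInput 3 n σ 0 2 = y := funext fun v => (hσ v).2.1
    have hz : prefInput 3 n σ 1 2 = z := funext fun v => (hσ v).2.2
    obtain ⟨π, hπ⟩ := htr σ
    have e1 := hπ 0 1 (by decide); have e2 := hπ 0 2 (by decide); have e3 := hπ 1 2 (by decide)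
    rw [hx] at e1; rw [hy] at e2; rw [hz] at e3
    rw [hfdef, hgdef, hhdef, e1, e2, e3]
    exact ok_perm π
  have H : NaeP n f p h := by
    intro x u z hpt
    have key := hok x (fun v => !(u v)) z (fun v => by
      have : ∀ a b c : Bool, nae a b c → Ok a (!b) c := by decide
      exact this _ _ _ (hpt v))
    have : ∀ a b c : Bool, Ok a b c → nae a (!b) c := by decide
    exact this _ _ _ key
  have hgp : ∀ y, g y = !(p (fun v => !(y v))) := by
    intro y
    rw [hpdef]
    have : (fun v => !(!(y v))) = y := funext fun v => by simp
    simp only [this, Bool.not_not]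
  rcases naeP_classify H with ⟨m, s, h1, h2, h3⟩ | ⟨b, h1, h2⟩ | ⟨b, h1, h2⟩ | ⟨b, h1, h2⟩
  · refine Or.inl ⟨m, s, h1, fun y => ?_, h3⟩
    rw [hgp y, h2]
    rw [dict, dict]
    simp
  · have hg : ∀ y, g y = b := by
      intro y; rw [hgp y, h2]; simp
    cases b
    · exact Or.inr (Or.inr (Or.inl ⟨h1, hg⟩))
    · exact Or.inr (Or.inl ⟨h1, hg⟩)
  · cases b
    · exact Or.inr (Or.inr (Or.inr (Or.inl ⟨h1, by simpa using h2⟩)))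
    · exact Or.inr (Or.inr (Or.inr (Or.inr (Or.inl ⟨h1, by simpa using h2⟩))))
  · have hg : ∀ y, g y = !b := by
      intro y; rw [hgp y, h1]
    cases b
    · exact Or.inr (Or.inr (Or.inr (Or.inr (Or.inr (Or.inl ⟨hg, by simpa using h2⟩)))))
    · exact Or.inr (Or.inr (Or.inr (Or.inr (Or.inr (Or.inr ⟨hg, by simpa using h2⟩)))))

end MosselAux

section MosselCounting

open Finset

variable {n : ℕ}

lemma nat_card_subtype {α : Type*} [Fintype α] (p : α → Prop) [DecidablePred p] :
    Nat.card {x : α // p x} = (univ.filter p).card := by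
  rw [Nat.card_eq_fintype_card, Fintype.card_subtype]

def flip1 (x : Cube n) (m : Fin n) : Cube n := Function.update x m (!(x m))

lemma flip1_flip1 (x : Cube n) (m : Fin n) : flip1 (flip1 x m) m = x := by
  funext v
  by_cases hv : v = m
  · subst hv; simp [flip1]
  · simp [flip1, Function.update_of_ne hv]

lemma cube_half (p : Cube n → Prop) [DecidablePred p] (m : Fin n)
    (hflip : ∀ x, p (flip1 x m) ↔ ¬ p x) :
    2 * (univ.filter p).card = 2 ^ n := by
  have h1 : (univ.filter p).card = (univ.filter fun x => ¬ p x).card := by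
    apply Finset.card_bij (fun x _ => flip1 x m)
    · intro a ha
      simp only [mem_filter, mem_univ, true_and] at ha ⊢
      exact fun hcon => ((hflip a).mp hcon) ha
    · intro a ha b hb hab
      have := congrArg (fun y => flip1 y m) hab
      simpa [flip1_flip1] using this
    · intro b hb
      simp only [mem_filter, mem_univ, true_and] at hb
      refine ⟨flip1 b m, ?_, flip1_flip1 b m⟩
      simp only [mem_filter, mem_univ, true_and]
      exact (hflip b).mpr hb
  have h2 := Finset.card_filter_add_card_filter_not (s := (univ : Finset (Cube n))) (p := p)
  rw [Finset.card_univ] at h2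
  have h3 : Fintype.card (Cube n) = 2 ^ n := by simp
  omega

lemma distB_eq (f g : Cube n → Bool) [DecidablePred fun x => f x ≠ g x] :
    distB n f g = ((univ.filter fun x => f x ≠ g x).card : ℝ) / 2 ^ n := by
  rw [distB, nat_card_subtype]

lemma distB_nonneg (f g : Cube n → Bool) : 0 ≤ distB n f g := by
  apply div_nonneg (by positivity) (by positivity)

lemma distB_triangle (f g h : Cube n → Bool) : distB n f g ≤ distB n f h + distB n h g := by
  classical
  rw [distB_eq, distB_eq, distB_eq, ← add_div, div_le_div_iff_of_pos_right (by positivity)]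
  have hsub : (univ.filter fun x => f x ≠ g x) ⊆
      (univ.filter fun x => f x ≠ h x) ∪ (univ.filter fun x => h x ≠ g x) := by
    intro x hx
    simp only [mem_filter, mem_univ, true_and, mem_union] at hx ⊢
    by_cases h1 : f x = h x
    · right; rw [← h1]; exact hx
    · left; exact h1
  calc ((univ.filter fun x => f x ≠ g x).card : ℝ)
      ≤ (((univ.filter fun x => f x ≠ h x) ∪ (univ.filter fun x => h x ≠ g x)).card : ℝ) := by
        exact_mod_cast Finset.card_le_card hsub
    _ ≤ _ := by exact_mod_cast Finset.card_union_le _ _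

lemma distB_symm (f g : Cube n → Bool) : distB n f g = distB n g f := by
  classical
  rw [distB_eq, distB_eq]
  have : (univ.filter fun x => f x ≠ g x) = (univ.filter fun x => g x ≠ f x) := by
    apply Finset.filter_congr
    intro x _
    exact ⟨Ne.symm, Ne.symm⟩
  rw [this]

lemma half_le_of_half (p : Cube n → Prop) [DecidablePred p] (m : Fin n)
    (hflip : ∀ x, p (flip1 x m) ↔ ¬ p x) :
    (1 : ℝ) / 2 ≤ ((univ.filter p).card : ℝ) / 2 ^ n := by
  have hh := cube_half p m hflip
  have hpos : (0:ℝ) < 2 ^ n := by positivity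
  have h2 : ((univ.filter p).card : ℝ) = (2 : ℝ) ^ n / 2 := by
    have : (2 : ℝ) * (univ.filter p).card = 2 ^ n := by exact_mod_cast hh
    linarith
  rw [h2, div_div, mul_comm, ← div_div, div_self (ne_of_gt hpos)]

lemma univ_filter_half_le (p : Cube n → Prop) [DecidablePred p]
    (hall : ∀ x, p x) : (1 : ℝ) / 2 ≤ ((univ.filter p).card : ℝ) / 2 ^ n := by
  have : univ.filter p = univ := Finset.filter_true_of_mem (fun x _ => hall x)
  rw [this, Finset.card_univ]
  have h3 : Fintype.card (Cube n) = 2 ^ n := by simp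
  rw [h3]
  push_cast
  rw [div_le_div_iff₀ (by norm_num) (by positivity)]
  nlinarith [pow_pos (show (0:ℝ) < 2 by norm_num) n]

lemma distB_dict_const (m : Fin n) (s c : Bool) :
    (1 : ℝ) / 2 ≤ distB n (dict n m s) (fun _ => c) := by
  classical
  rw [distB_eq]
  apply half_le_of_half _ m
  intro x
  simp only [dict, flip1, Function.update_self]
  cases x m <;> cases s <;> cases c <;> simp

lemma distB_dict_dict_ne (m m' : Fin n) (s s' : Bool) (h : (m, s) ≠ (m', s')) :
    (1 : ℝ) / 2 ≤ distB n (dict n m s) (dict n m' s') := by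
  classical
  rw [distB_eq]
  rcases eq_or_ne m m' with rfl | hm
  · have hs : s ≠ s' := fun hc => h (by rw [hc])
    apply univ_filter_half_le
    intro x
    simp only [dict]
    cases x m <;> cases s <;> cases s' <;> simp_all
  · apply half_le_of_half _ m
    intro x
    have hm' : m' ≠ m := fun hc => hm hc.symm
    simp only [dict, flip1, Function.update_self, Function.update_of_ne hm']
    cases x m <;> cases x m' <;> cases s <;> cases s' <;> simp

lemma distB_const_const (c : Bool) :
    (1 : ℝ) / 2 ≤ distB n (fun _ => c) (fun _ => (!c : Bool)) := by
  classical
  rw [distB_eq]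
  apply univ_filter_half_le
  intro x
  cases c <;> simp

theorem exists_perm_order {α : Type*} [Fintype α] [DecidableEq α]
    (R : α → α → Prop) [DecidableRel R]
    (hirr : ∀ a, ¬ R a a)
    (htot : ∀ a b, a ≠ b → R a b ∨ R b a)
    (htr : ∀ a b c, R a b → R b c → R a c) :
    ∃ π : α ≃ Fin (Fintype.card α), ∀ a b, R a b ↔ π a < π b := by
  set rnk : α → ℕ := fun a => (univ.filter fun b => R b a).card with hrnk
  have hlt : ∀ a, rnk a < Fintype.card α := by
    intro a
    have : (univ.filter fun b => R b a) ⊆ univ.erase a := by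
      intro b hb
      simp only [mem_filter, mem_univ, true_and] at hb
      exact Finset.mem_erase.mpr ⟨fun hc => hirr a (hc ▸ hb), mem_univ b⟩
    calc rnk a ≤ (univ.erase a).card := Finset.card_le_card this
      _ < univ.card := Finset.card_erase_lt_of_mem (mem_univ a)
      _ = Fintype.card α := Finset.card_univ
  have hmono : ∀ a b, R a b → rnk a < rnk b := by
    intro a b hab
    apply Finset.card_lt_card
    rw [Finset.ssubset_iff_of_subset]
    · exact ⟨a, by simp only [mem_filter, mem_univ, true_and]; exact ⟨hab, hirr a⟩⟩
    · intro c hc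
      simp only [mem_filter, mem_univ, true_and] at hc ⊢
      exact htr c a b hc hab
  set π0 : α → Fin (Fintype.card α) := fun a => ⟨rnk a, hlt a⟩ with hπ0
  have hinj : Function.Injective π0 := by
    intro a b hab
    by_contra hne
    rcases htot a b hne with h | h
    · have := hmono a b h
      simp only [hπ0, Fin.mk.injEq] at hab
      omega
    · have := hmono b a h
      simp only [hπ0, Fin.mk.injEq] at hab
      omega
  have hbij : Function.Bijective π0 := by
    rw [Fintype.bijective_iff_injective_and_card]
    exact ⟨hinj, by simp⟩
  refine ⟨Equiv.ofBijective π0 hbij, fun a b => ?_⟩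
  constructor
  · intro hab
    exact hmono a b hab
  · intro hab
    by_contra hR
    rcases eq_or_ne a b with rfl | hne
    · exact absurd hab (lt_irrefl _)
    · rcases htot a b hne with h | h
      · exact hR h
      · have h2 := hmono b a h
        have h3 : (Equiv.ofBijective π0 hbij a : ℕ) < Equiv.ofBijective π0 hbij a := by
          calc (Equiv.ofBijective π0 hbij a : ℕ) < (Equiv.ofBijective π0 hbij b : ℕ) := hab
            _ < _ := h2
        exact absurd h3 (lt_irrefl _)

noncomputable def relOrd {k : ℕ} (e : Fin 3 → Fin k) (he : Function.Injective e)
    (τ : Equiv.Perm (Fin k)) : Equiv.Perm (Fin 3) :=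
  ((exists_perm_order (fun a b => τ (e a) < τ (e b))
      (fun a => lt_irrefl _)
      (fun a b hab => lt_or_gt_of_ne (fun hc => hab (he (τ.injective hc))))
      (fun a b c => lt_trans)).choose.trans (finCongr (by simp)))

lemma relOrd_spec {k : ℕ} (e : Fin 3 → Fin k) (he : Function.Injective e)
    (τ : Equiv.Perm (Fin k)) (a b : Fin 3) :
    τ (e a) < τ (e b) ↔ relOrd e he τ a < relOrd e he τ b := by
  rw [relOrd]
  have := (exists_perm_order (fun a b => τ (e a) < τ (e b))
      (fun a => lt_irrefl _)
      (fun a b hab => lt_or_gt_of_ne (fun hc => hab (he (τ.injective hc))))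
      (fun a b c => lt_trans)).choose_spec a b
  rw [this]
  constructor
  · intro h; exact h
  · intro h; exact h

lemma perm3_ext : ∀ π π' : Equiv.Perm (Fin 3),
    (∀ a b, π a < π b ↔ π' a < π' b) → π = π' := by decide

section RelOrdFacts
variable {k : ℕ} (e : Fin 3 → Fin k) (he : Function.Injective e)

lemma relOrd_mul (τ : Equiv.Perm (Fin k)) (g : Equiv.Perm (Fin 3)) :
    relOrd e he (τ * (g.viaFintypeEmbedding ⟨e, he⟩)) = relOrd e he τ * g := by
  apply perm3_ext
  intro a b
  rw [← relOrd_spec]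
  simp only [Equiv.Perm.mul_apply]
  rw [show (g.viaFintypeEmbedding ⟨e, he⟩) (e a) = e (g a) from
        Equiv.Perm.viaFintypeEmbedding_apply_image g ⟨e, he⟩ a,
      show (g.viaFintypeEmbedding ⟨e, he⟩) (e b) = e (g b) from
        Equiv.Perm.viaFintypeEmbedding_apply_image g ⟨e, he⟩ b]
  exact relOrd_spec e he τ (g a) (g b)

lemma relOrd_fiber_card_eq (π π' : Equiv.Perm (Fin 3)) :
    (univ.filter fun τ => relOrd e he τ = π).card =
    (univ.filter fun τ => relOrd e he τ = π').card := by
  have key : ∀ ρ ρ' : Equiv.Perm (Fin 3),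
      (univ.filter fun τ => relOrd e he τ = ρ).card ≤
      (univ.filter fun τ => relOrd e he τ = ρ').card := by
    intro ρ ρ'
    set g := ρ⁻¹ * ρ' with hg
    apply Finset.card_le_card_of_injOn (fun τ => τ * (g.viaFintypeEmbedding ⟨e, he⟩))
    · intro τ hτ
      simp only [coe_filter, mem_filter, mem_univ, true_and, Set.mem_setOf_eq] at hτ ⊢
      rw [relOrd_mul e he τ g, hτ, hg]
      group
    · intro a _ b _ hab
      exact mul_right_cancel hab
  exact le_antisymm (key π π') (key π' π)

lemma relOrd_fiber_card (π : Equiv.Perm (Fin 3)) :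
    6 * (univ.filter fun τ => relOrd e he τ = π).card = Nat.factorial k := by
  have hsum : ∑ ρ : Equiv.Perm (Fin 3), (univ.filter fun τ => relOrd e he τ = ρ).card
      = Fintype.card (Equiv.Perm (Fin k)) := by
    rw [← Finset.card_univ]
    exact (Finset.card_eq_sum_card_fiberwise (fun τ _ => mem_univ (relOrd e he τ))).symm
  have hconst : ∀ ρ : Equiv.Perm (Fin 3),
      (univ.filter fun τ => relOrd e he τ = ρ).card
      = (univ.filter fun τ => relOrd e he τ = π).card :=
    fun ρ => relOrd_fiber_card_eq e he ρ π
  rw [Finset.sum_congr rfl (fun ρ _ => hconst ρ), Finset.sum_const, Finset.card_univ] at hsum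
  have h6 : Fintype.card (Equiv.Perm (Fin 3)) = 6 := by
    rw [Fintype.card_perm, Fintype.card_fin]
    rfl
  rw [h6] at hsum
  rw [Fintype.card_perm] at hsum
  simpa [smul_eq_mul, Fintype.card_fin] using hsum

end RelOrdFacts

lemma card_filter_comp {S T : Type*} [Fintype S] [Fintype T] [DecidableEq T]
    (Φ : S → T) (d : ℕ) (hd : ∀ t, (univ.filter fun s => Φ s = t).card = d)
    (Q : T → Prop) [DecidablePred Q] :
    (univ.filter fun s => Q (Φ s)).card = d * (univ.filter Q).card := by
  have hcv := Finset.card_eq_sum_card_fiberwise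
    (s := univ.filter fun s => Q (Φ s)) (t := univ.filter Q) (f := Φ)
    (fun x hx => by
      simp only [coe_filter, mem_filter, mem_univ, true_and, Set.mem_setOf_eq] at hx ⊢
      exact hx)
  rw [hcv]
  have heach : ∀ t ∈ univ.filter Q,
      ((univ.filter fun s => Q (Φ s)).filter fun s => Φ s = t).card = d := by
    intro t ht
    simp only [mem_filter, mem_univ, true_and] at ht
    rw [Finset.filter_filter]
    rw [← hd t]
    congr 1
    apply Finset.filter_congr
    intro s _
    constructor
    · exact fun h => h.2
    · exact fun h => ⟨h ▸ ht, h⟩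
  rw [Finset.sum_congr rfl heach, Finset.sum_const, smul_eq_mul, mul_comm]

lemma card_profile_fiber {n : ℕ} {τ β : Type*} [Fintype τ] [DecidableEq τ] [DecidableEq β]
    (g : τ → β) (d : ℕ) (hd : ∀ b, (univ.filter fun t => g t = b).card = d)
    (x : Fin n → β) :
    (univ.filter fun σ : Fin n → τ => (fun v => g (σ v)) = x).card = d ^ n := by
  have h1 : (univ.filter fun σ : Fin n → τ => (fun v => g (σ v)) = x).card
      = Fintype.card {σ : Fin n → τ // ∀ v, g (σ v) = x v} := by
    rw [Fintype.card_subtype]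
    congr 1
    apply Finset.filter_congr
    intro σ _
    rw [funext_iff]
  rw [h1]
  rw [Fintype.card_congr (Equiv.subtypePiEquivPi (p := fun v (t : τ) => g t = x v))]
  rw [Fintype.card_pi]
  have h2 : ∀ v : Fin n, Fintype.card {t : τ // g t = x v} = d := by
    intro v
    rw [Fintype.card_subtype]
    exact hd (x v)
  rw [Finset.prod_congr rfl (fun v _ => h2 v)]
  simp

end MosselCounting

section MosselBridge

open Finset

variable {k n : ℕ}

lemma swap_decide (τ : Equiv.Perm (Fin k)) (i j : Fin k) (hij : i ≠ j) :
    decide (τ j < τ i) = !decide (τ i < τ j) := by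
  have hne : τ i ≠ τ j := fun hc => hij (τ.injective hc)
  rcases lt_or_gt_of_ne hne with h | h
  · simp [h, lt_asymm h]
  · simp [h, lt_asymm h]

lemma pair_half (i j : Fin k) (hij : i ≠ j) (c : Bool) :
    2 * (univ.filter fun τ : Equiv.Perm (Fin k) => decide (τ i < τ j) = c).card
      = Nat.factorial k := by
  have h1 : (univ.filter fun τ : Equiv.Perm (Fin k) => decide (τ i < τ j) = c).card
      = (univ.filter fun τ : Equiv.Perm (Fin k) => decide (τ i < τ j) = !c).card := by
    apply Finset.card_bij (fun τ _ => τ * Equiv.swap i j)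
    · intro τ hτ
      simp only [mem_filter, mem_univ, true_and] at hτ ⊢
      have hi : (τ * Equiv.swap i j) i = τ j := by
        simp [Equiv.Perm.mul_apply, Equiv.swap_apply_left]
      have hj : (τ * Equiv.swap i j) j = τ i := by
        simp [Equiv.Perm.mul_apply, Equiv.swap_apply_right]
      rw [hi, hj, swap_decide τ i j hij, hτ]
    · intro a _ b _ hab
      exact mul_right_cancel hab
    · intro b hb
      simp only [mem_filter, mem_univ, true_and] at hb
      refine ⟨b * Equiv.swap i j, ?_, ?_⟩
      · simp only [mem_filter, mem_univ, true_and]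
        have hi : (b * Equiv.swap i j) i = b j := by
          simp [Equiv.Perm.mul_apply, Equiv.swap_apply_left]
        have hj : (b * Equiv.swap i j) j = b i := by
          simp [Equiv.Perm.mul_apply, Equiv.swap_apply_right]
        rw [hi, hj, swap_decide b i j hij, hb]
        cases c <;> rfl
      · rw [mul_assoc, Equiv.swap_mul_self, mul_one]
  have h2 := Finset.card_filter_add_card_filter_not
    (s := (univ : Finset (Equiv.Perm (Fin k))))
    (p := fun τ => decide (τ i < τ j) = c)
  have h3 : (univ.filter fun τ : Equiv.Perm (Fin k) => ¬ (decide (τ i < τ j) = c))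
      = (univ.filter fun τ : Equiv.Perm (Fin k) => decide (τ i < τ j) = !c) := by
    apply Finset.filter_congr
    intro τ _
    cases htc : decide (τ i < τ j) <;> cases c <;> simp
  rw [h3] at h2
  rw [Finset.card_univ, Fintype.card_perm, Fintype.card_fin] at h2
  omega

lemma pair_marginal (i j : Fin k) (hij : i ≠ j) (A : Cube n → Prop) [DecidablePred A] :
    ((univ.filter fun σ : Fin n → Equiv.Perm (Fin k) => A (prefInput k n σ i j)).card : ℝ)
      / (Nat.factorial k : ℝ) ^ n
    = ((univ.filter A).card : ℝ) / 2 ^ n := by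
  classical
  set d := (univ.filter fun τ : Equiv.Perm (Fin k) => decide (τ i < τ j) = true).card with hd
  have hdb : ∀ b : Bool, (univ.filter fun τ : Equiv.Perm (Fin k) => decide (τ i < τ j) = b).card = d := by
    intro b
    cases b
    · have ht := pair_half i j hij true
      have hf := pair_half i j hij false
      omega
    · rfl
  have hfib : ∀ x : Cube n,
      (univ.filter fun σ : Fin n → Equiv.Perm (Fin k) => prefInput k n σ i j = x).card = d ^ n := by
    intro x
    exact card_profile_fiber (fun τ : Equiv.Perm (Fin k) => decide (τ i < τ j)) d hdb x
  have hcard := card_filter_comp (fun σ : Fin n → Equiv.Perm (Fin k) => prefInput k n σ i j)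
    (d ^ n) hfib A
  rw [hcard]
  have hkd : Nat.factorial k = 2 * d := (pair_half i j hij true).symm
  have hdpos : 0 < d := by
    have := Nat.factorial_pos k
    omega
  rw [hkd]
  push_cast
  rw [mul_pow]
  have h2 : (0:ℝ) < (2:ℝ) ^ n := by positivity
  have hD : (0:ℝ) < (d:ℝ) ^ n := by positivity
  field_simp

lemma distB_pair (i j : Fin k) (hij : i ≠ j) (f g : Cube n → Bool) :
    ((univ.filter fun σ : Fin n → Equiv.Perm (Fin k) =>
        f (prefInput k n σ i j) ≠ g (prefInput k n σ i j)).card : ℝ)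
      / (Nat.factorial k : ℝ) ^ n = distB n f g := by
  classical
  rw [pair_marginal i j hij (fun x => f x ≠ g x), distB_eq]

lemma distk_eq (F G : Fin k → Fin k → Cube n → Bool)
    [DecidablePred fun σ : Fin n → Equiv.Perm (Fin k) => ∃ i j : Fin k, i < j ∧
        F i j (prefInput k n σ i j) ≠ G i j (prefInput k n σ i j)] :
    distk k n F G = ((univ.filter fun σ : Fin n → Equiv.Perm (Fin k) => ∃ i j : Fin k, i < j ∧
        F i j (prefInput k n σ i j) ≠ G i j (prefInput k n σ i j)).card : ℝ)
      / (Nat.factorial k : ℝ) ^ n := by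
  rw [distk, nat_card_subtype]

lemma PFk_eq (F : Fin k → Fin k → Cube n → Bool)
    [DecidablePred fun σ : Fin n → Equiv.Perm (Fin k) => ¬ TransOutcome k n F σ] :
    PFk k n F = ((univ.filter fun σ : Fin n → Equiv.Perm (Fin k) =>
        ¬ TransOutcome k n F σ).card : ℝ) / (Nat.factorial k : ℝ) ^ n := by
  rw [PFk, nat_card_subtype]

lemma distk_nonneg (F G : Fin k → Fin k → Cube n → Bool) : 0 ≤ distk k n F G := by
  apply div_nonneg (by positivity) (by positivity)

lemma distk_le_sum (F G : Fin k → Fin k → Cube n → Bool) :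
    distk k n F G ≤ ∑ p ∈ (univ.filter fun p : Fin k × Fin k => p.1 < p.2),
      distB n (F p.1 p.2) (G p.1 p.2) := by
  classical
  rw [distk_eq]
  have hfacpos : (0:ℝ) < (Nat.factorial k : ℝ) ^ n := by
    have := Nat.factorial_pos k
    positivity
  have hsub : (univ.filter fun σ : Fin n → Equiv.Perm (Fin k) => ∃ i j : Fin k, i < j ∧
        F i j (prefInput k n σ i j) ≠ G i j (prefInput k n σ i j))
      ⊆ (univ.filter fun p : Fin k × Fin k => p.1 < p.2).biUnion
        (fun p => univ.filter fun σ : Fin n → Equiv.Perm (Fin k) =>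
          F p.1 p.2 (prefInput k n σ p.1 p.2) ≠ G p.1 p.2 (prefInput k n σ p.1 p.2)) := by
    intro σ hσ
    simp only [mem_filter, mem_univ, true_and] at hσ
    obtain ⟨i, j, hij, hne⟩ := hσ
    apply Finset.mem_biUnion.mpr
    exact ⟨(i, j), by simp [hij], by simp only [mem_filter, mem_univ, true_and]; exact hne⟩
  have hcard : ((univ.filter fun σ : Fin n → Equiv.Perm (Fin k) => ∃ i j : Fin k, i < j ∧
        F i j (prefInput k n σ i j) ≠ G i j (prefInput k n σ i j)).card : ℝ)
      ≤ ∑ p ∈ (univ.filter fun p : Fin k × Fin k => p.1 < p.2),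
        ((univ.filter fun σ : Fin n → Equiv.Perm (Fin k) =>
          F p.1 p.2 (prefInput k n σ p.1 p.2) ≠ G p.1 p.2 (prefInput k n σ p.1 p.2)).card : ℝ) := by
    have := Finset.card_le_card hsub
    have hb := Finset.card_biUnion_le (s := univ.filter fun p : Fin k × Fin k => p.1 < p.2)
      (t := fun p => univ.filter fun σ : Fin n → Equiv.Perm (Fin k) =>
          F p.1 p.2 (prefInput k n σ p.1 p.2) ≠ G p.1 p.2 (prefInput k n σ p.1 p.2))
    exact_mod_cast le_trans this hb
  rw [div_le_iff₀ hfacpos]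
  rw [Finset.sum_mul]
  refine le_trans hcard (Finset.sum_le_sum ?_)
  intro p hp
  simp only [mem_filter, mem_univ, true_and] at hp
  rw [← distB_pair p.1 p.2 (ne_of_lt hp) (F p.1 p.2) (G p.1 p.2)]
  rw [div_mul_cancel₀]
  exact ne_of_gt hfacpos

lemma distB_le_distk3 (a b : Fin 3) (hab : a < b) (F G : Fin 3 → Fin 3 → Cube n → Bool) :
    distB n (F a b) (G a b) ≤ distk 3 n F G := by
  classical
  rw [distk_eq, ← distB_pair a b (ne_of_lt hab) (F a b) (G a b)]
  have hpos : (0:ℝ) < (Nat.factorial 3 : ℝ) ^ n := by positivity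
  rw [div_le_div_iff_of_pos_right hpos]
  have hsub : (univ.filter fun σ : Fin n → Equiv.Perm (Fin 3) =>
      F a b (prefInput 3 n σ a b) ≠ G a b (prefInput 3 n σ a b))
      ⊆ (univ.filter fun σ : Fin n → Equiv.Perm (Fin 3) => ∃ i j : Fin 3, i < j ∧
        F i j (prefInput 3 n σ i j) ≠ G i j (prefInput 3 n σ i j)) := by
    intro σ hσ
    simp only [mem_filter, mem_univ, true_and] at hσ ⊢
    exact ⟨a, b, hab, hσ⟩
  exact_mod_cast Finset.card_le_card hsub

end MosselBridge

section MosselTriple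

open Finset

variable {k n : ℕ}

def e3 (i j l : Fin k) : Fin 3 → Fin k := ![i, j, l]

lemma e3_lt {i j l : Fin k} (hij : i < j) (hjl : j < l) :
    ∀ a b : Fin 3, a < b → e3 i j l a < e3 i j l b := by
  intro a b hab
  have hil : i < l := lt_trans hij hjl
  fin_cases a <;> fin_cases b <;>
    simp_all [e3, Matrix.cons_val_zero, Matrix.cons_val_one, Matrix.head_cons] <;>
    omega

lemma e3_inj {i j l : Fin k} (hij : i < j) (hjl : j < l) :
    Function.Injective (e3 i j l) := by
  intro a b hab
  by_contra hne
  rcases lt_or_gt_of_ne hne with h | h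
  · exact absurd hab (ne_of_lt (e3_lt hij hjl a b h))
  · exact absurd hab.symm (ne_of_lt (e3_lt hij hjl b a h))

def tripleF (F : Fin k → Fin k → Cube n → Bool) (i j l : Fin k) :
    Fin 3 → Fin 3 → Cube n → Bool :=
  fun a b => F (e3 i j l a) (e3 i j l b)

lemma pref_transfer {i j l : Fin k} (hij : i < j) (hjl : j < l)
    (σ : Fin n → Equiv.Perm (Fin k)) (a b : Fin 3) :
    prefInput k n σ (e3 i j l a) (e3 i j l b)
      = prefInput 3 n (fun v => relOrd (e3 i j l) (e3_inj hij hjl) (σ v)) a b := by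
  funext v
  simp only [prefInput]
  exact decide_eq_decide.mpr (relOrd_spec (e3 i j l) (e3_inj hij hjl) (σ v) a b)

lemma trans_transfer {i j l : Fin k} (hij : i < j) (hjl : j < l)
    (F : Fin k → Fin k → Cube n → Bool) (σ : Fin n → Equiv.Perm (Fin k))
    (h : TransOutcome k n F σ) :
    TransOutcome 3 n (tripleF F i j l) (fun v => relOrd (e3 i j l) (e3_inj hij hjl) (σ v)) := by
  obtain ⟨π, hπ⟩ := h
  refine ⟨relOrd (e3 i j l) (e3_inj hij hjl) π, fun a b hab => ?_⟩
  have h1 : tripleF F i j l a b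
      (prefInput 3 n (fun v => relOrd (e3 i j l) (e3_inj hij hjl) (σ v)) a b)
      = F (e3 i j l a) (e3 i j l b) (prefInput k n σ (e3 i j l a) (e3 i j l b)) := by
    rw [tripleF, pref_transfer hij hjl]
  rw [h1, hπ _ _ (e3_lt hij hjl a b hab)]
  exact decide_eq_decide.mpr (relOrd_spec (e3 i j l) (e3_inj hij hjl) π a b)

lemma PFk_triple_le {i j l : Fin k} (hij : i < j) (hjl : j < l)
    (F : Fin k → Fin k → Cube n → Bool) :
    PFk 3 n (tripleF F i j l) ≤ PFk k n F := by
  classical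
  set e := e3 i j l with he0
  set he := e3_inj hij hjl with he1
  obtain ⟨c, hc6, hcall⟩ : ∃ c, 6 * c = Nat.factorial k ∧ ∀ π : Equiv.Perm (Fin 3),
      (univ.filter fun τ : Equiv.Perm (Fin k) => relOrd e he τ = π).card = c := by
    refine ⟨(univ.filter fun τ : Equiv.Perm (Fin k) => relOrd e he τ = 1).card,
      relOrd_fiber_card e he 1, fun π => ?_⟩
    have h1 := relOrd_fiber_card e he π
    have h2 := relOrd_fiber_card e he 1
    omega
  have hfib : ∀ x : Fin n → Equiv.Perm (Fin 3),
      (univ.filter fun σ : Fin n → Equiv.Perm (Fin k) =>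
        (fun v => relOrd e he (σ v)) = x).card = c ^ n :=
    card_profile_fiber (relOrd e he) c hcall
  have hcomp := card_filter_comp (fun σ : Fin n → Equiv.Perm (Fin k) => fun v => relOrd e he (σ v))
    (c ^ n) hfib (fun σ₃ => ¬ TransOutcome 3 n (tripleF F i j l) σ₃)
  have hsub : (univ.filter fun σ : Fin n → Equiv.Perm (Fin k) =>
      ¬ TransOutcome 3 n (tripleF F i j l) (fun v => relOrd e he (σ v)))
      ⊆ (univ.filter fun σ : Fin n → Equiv.Perm (Fin k) => ¬ TransOutcome k n F σ) := by
    intro σ hσ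
    simp only [mem_filter, mem_univ, true_and] at hσ ⊢
    exact fun hT => hσ (trans_transfer hij hjl F σ hT)
  rw [PFk_eq, PFk_eq]
  have hcpos : 0 < c := by
    rcases Nat.eq_zero_or_pos c with rfl | h
    · exfalso
      have := Nat.factorial_pos k
      rw [← hc6] at this
      simp at this
    · exact h
  have hfca : ((Nat.factorial k : ℝ)) ^ n = (6 : ℝ) ^ n * (c : ℝ) ^ n := by
    rw [← hc6]
    push_cast
    rw [mul_pow]
  have h3f : (Nat.factorial 3 : ℝ) = 6 := by norm_num [Nat.factorial]
  rw [h3f]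
  have hle : ((univ.filter fun σ : Fin n → Equiv.Perm (Fin k) =>
      ¬ TransOutcome 3 n (tripleF F i j l) (fun v => relOrd e he (σ v))).card : ℝ)
      ≤ ((univ.filter fun σ : Fin n → Equiv.Perm (Fin k) => ¬ TransOutcome k n F σ).card : ℝ) := by
    exact_mod_cast Finset.card_le_card hsub
  rw [hcomp] at hle
  have h6pos : (0:ℝ) < (6:ℝ) ^ n := by positivity
  have hcpow : (0:ℝ) < (c:ℝ) ^ n := by positivity
  rw [hfca, div_le_div_iff₀ (by positivity) (by positivity)]
  push_cast at hle ⊢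
  nlinarith [hle, h6pos, hcpow]

end MosselTriple

section MosselLabels

open Finset

variable {k n : ℕ}

def PinA (F : Fin k → Fin k → Cube n → Bool) (β : ℝ) (i j : Fin k) : Prop :=
  distB n (F i j) (fun _ => true) ≤ β

def PinB (F : Fin k → Fin k → Cube n → Bool) (β : ℝ) (i j : Fin k) : Prop :=
  distB n (F i j) (fun _ => false) ≤ β

def Dct (F : Fin k → Fin k → Cube n → Bool) (β : ℝ) (i j : Fin k) (m : Fin n) (s : Bool) : Prop :=
  distB n (F i j) (dict n m s) ≤ β

lemma distB_self (f : Cube n → Bool) : distB n f f = 0 := by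
  classical
  rw [distB_eq]
  simp

/-- the triple lemma: every ascending triple is close to a member of `F_3(n)`,
hence carries one of seven structural patterns. -/
lemma TRI (F : Fin k → Fin k → Cube n → Bool) (β : ℝ)
    (hext : ∀ i j l : Fin k, i < j → j < l → ∃ G : Fin 3 → Fin 3 → Cube n → Bool,
      (∀ σ, TransOutcome 3 n G σ) ∧ distk 3 n (tripleF F i j l) G ≤ β)
    (i j l : Fin k) (hij : i < j) (hjl : j < l) :
    (∃ m s, Dct F β i j m s ∧ Dct F β i l m s ∧ Dct F β j l m s)
    ∨ (PinA F β i j ∧ PinA F β i l)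
    ∨ (PinB F β i j ∧ PinB F β i l)
    ∨ (PinB F β i j ∧ PinA F β j l)
    ∨ (PinA F β i j ∧ PinB F β j l)
    ∨ (PinA F β i l ∧ PinA F β j l)
    ∨ (PinB F β i l ∧ PinB F β j l) := by
  obtain ⟨G, htr, hdist⟩ := hext i j l hij hjl
  have ht01 : tripleF F i j l 0 1 = F i j := by simp [tripleF, e3]
  have ht02 : tripleF F i j l 0 2 = F i l := by simp [tripleF, e3]
  have ht12 : tripleF F i j l 1 2 = F j l := by simp [tripleF, e3]
  have h01 : distB n (F i j) (G 0 1) ≤ β := by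
    have := distB_le_distk3 0 1 (by decide) (tripleF F i j l) G
    rw [ht01] at this
    exact le_trans this hdist
  have h02 : distB n (F i l) (G 0 2) ≤ β := by
    have := distB_le_distk3 0 2 (by decide) (tripleF F i j l) G
    rw [ht02] at this
    exact le_trans this hdist
  have h12 : distB n (F j l) (G 1 2) ≤ β := by
    have := distB_le_distk3 1 2 (by decide) (tripleF F i j l) G
    rw [ht12] at this
    exact le_trans this hdist
  rcases classify3 htr with ⟨m, s, c1, c2, c3⟩ | ⟨c1, c2⟩ | ⟨c1, c2⟩ | ⟨c1, c2⟩ | ⟨c1, c2⟩ | ⟨c1, c2⟩ | ⟨c1, c2⟩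
  · refine Or.inl ⟨m, s, ?_, ?_, ?_⟩
    · rwa [funext c1] at h01
    · rwa [funext c2] at h02
    · rwa [funext c3] at h12
  · exact Or.inr (Or.inl ⟨by rwa [funext c1] at h01, by rwa [funext c2] at h02⟩)
  · exact Or.inr (Or.inr (Or.inl ⟨by rwa [funext c1] at h01, by rwa [funext c2] at h02⟩))
  · exact Or.inr (Or.inr (Or.inr (Or.inl ⟨by rwa [funext c1] at h01, by rwa [funext c2] at h12⟩)))
  · exact Or.inr (Or.inr (Or.inr (Or.inr (Or.inl ⟨by rwa [funext c1] at h01, by rwa [funext c2] at h12⟩))))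
  · exact Or.inr (Or.inr (Or.inr (Or.inr (Or.inr (Or.inl ⟨by rwa [funext c1] at h02, by rwa [funext c2] at h12⟩)))))
  · exact Or.inr (Or.inr (Or.inr (Or.inr (Or.inr (Or.inr ⟨by rwa [funext c1] at h02, by rwa [funext c2] at h12⟩)))))

-- exclusivity lemmas (β < 1/4)
variable {F : Fin k → Fin k → Cube n → Bool} {β : ℝ}

lemma pin_excl_AB (hβ : β < 1/4) {i j : Fin k} (hA : PinA F β i j) (hB : PinB F β i j) : False := by
  have h1 : (1:ℝ)/2 ≤ distB n (fun _ => true) (fun _ => false) := by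
    have := distB_const_const (n := n) true
    simpa using this
  have h2 := distB_triangle (n := n) (fun _ => true) (fun _ => false) (F i j)
  rw [distB_symm (fun _ => true) (F i j)] at h2
  unfold PinA at hA
  unfold PinB at hB
  linarith

lemma pin_excl_AD (hβ : β < 1/4) {i j : Fin k} {m : Fin n} {s : Bool}
    (hA : PinA F β i j) (hD : Dct F β i j m s) : False := by
  have h1 : (1:ℝ)/2 ≤ distB n (dict n m s) (fun _ => true) := distB_dict_const m s true
  have h2 := distB_triangle (n := n) (dict n m s) (fun _ => true) (F i j)
  rw [distB_symm (dict n m s) (F i j)] at h2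
  unfold PinA at hA
  unfold Dct at hD
  linarith

lemma pin_excl_BD (hβ : β < 1/4) {i j : Fin k} {m : Fin n} {s : Bool}
    (hB : PinB F β i j) (hD : Dct F β i j m s) : False := by
  have h1 : (1:ℝ)/2 ≤ distB n (dict n m s) (fun _ => false) := distB_dict_const m s false
  have h2 := distB_triangle (n := n) (dict n m s) (fun _ => false) (F i j)
  rw [distB_symm (dict n m s) (F i j)] at h2
  unfold PinB at hB
  unfold Dct at hD
  linarith

lemma dct_unique (hβ : β < 1/4) {i j : Fin k} {m m' : Fin n} {s s' : Bool}
    (hD : Dct F β i j m s) (hD' : Dct F β i j m' s') : (m, s) = (m', s') := by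
  by_contra hne
  have h1 : (1:ℝ)/2 ≤ distB n (dict n m s) (dict n m' s') := distB_dict_dict_ne m m' s s' hne
  have h2 := distB_triangle (n := n) (dict n m s) (dict n m' s') (F i j)
  rw [distB_symm (dict n m s) (F i j)] at h2
  unfold Dct at hD hD'
  linarith

end MosselLabels

section MosselConstruction

open Finset

variable {k n : ℕ}

open Classical in
noncomputable def Gc (F : Fin k → Fin k → Cube n → Bool) (β : ℝ) :
    Fin k → Fin k → Cube n → Bool := fun i j =>
  if PinA F β i j then (fun _ => true)
  else if PinB F β i j then (fun _ => false)
  else if hd : ∃ p : Fin n × Bool, Dct F β i j p.1 p.2 then dict n hd.choose.1 hd.choose.2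
  else F i j

variable {F : Fin k → Fin k → Cube n → Bool} {β : ℝ}

lemma Gc_of_pinA {i j : Fin k} (hA : PinA F β i j) : Gc F β i j = fun _ => true := by
  rw [Gc]
  rw [if_pos hA]

lemma Gc_of_pinB (hβ : β < 1/4) {i j : Fin k} (hB : PinB F β i j) :
    Gc F β i j = fun _ => false := by
  rw [Gc, if_neg (fun hA => pin_excl_AB hβ hA hB), if_pos hB]

lemma Gc_of_dct (hβ : β < 1/4) {i j : Fin k} {m : Fin n} {s : Bool} (hD : Dct F β i j m s) :
    Gc F β i j = dict n m s := by
  rw [Gc, if_neg (fun hA => pin_excl_AD hβ hA hD), if_neg (fun hB => pin_excl_BD hβ hB hD)]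
  have hex : ∃ p : Fin n × Bool, Dct F β i j p.1 p.2 := ⟨(m, s), hD⟩
  rw [dif_pos hex]
  have hch : Dct F β i j hex.choose.1 hex.choose.2 := hex.choose_spec
  have heq : (hex.choose.1, hex.choose.2) = (m, s) := dct_unique hβ hch hD
  have h1 : hex.choose.1 = m := congrArg Prod.fst heq
  have h2 : hex.choose.2 = s := congrArg Prod.snd heq
  rw [h1, h2]

lemma Gc_dist (hβ0 : 0 ≤ β) (hβ : β < 1/4) (i j : Fin k) :
    distB n (F i j) (Gc F β i j) ≤ β := by
  by_cases hA : PinA F β i j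
  · rw [Gc_of_pinA hA]; exact hA
  by_cases hB : PinB F β i j
  · rw [Gc_of_pinB hβ hB]; exact hB
  by_cases hd : ∃ p : Fin n × Bool, Dct F β i j p.1 p.2
  · obtain ⟨⟨m, s⟩, hD⟩ := hd
    rw [Gc_of_dct hβ hD]; exact hD
  · rw [Gc, if_neg hA, if_neg hB, dif_neg hd, distB_self]
    exact hβ0

lemma ok_decide {α : Type*} [LinearOrder α] (A B C : α) :
    Ok (decide (A < B)) (decide (A < C)) (decide (B < C)) := by
  constructor
  · rintro ⟨h1, h2, h3⟩
    rw [decide_eq_true_eq] at h1 h3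
    rw [decide_eq_false_iff_not] at h2
    exact h2 (lt_trans h1 h3)
  · rintro ⟨h1, h2, h3⟩
    rw [decide_eq_true_eq] at h2
    rw [decide_eq_false_iff_not] at h1 h3
    exact h1 (lt_of_lt_of_le h2 (not_lt.mp h3))

lemma ok_xor : ∀ (s a b c : Bool), Ok a b c → Ok (xor a s) (xor b s) (xor c s) := by decide

lemma Gc_ok (hβ : β < 1/4)
    (htri : ∀ i j l : Fin k, i < j → j < l →
      (∃ m s, Dct F β i j m s ∧ Dct F β i l m s ∧ Dct F β j l m s)
      ∨ (PinA F β i j ∧ PinA F β i l)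
      ∨ (PinB F β i j ∧ PinB F β i l)
      ∨ (PinB F β i j ∧ PinA F β j l)
      ∨ (PinA F β i j ∧ PinB F β j l)
      ∨ (PinA F β i l ∧ PinA F β j l)
      ∨ (PinB F β i l ∧ PinB F β j l))
    (σ : Fin n → Equiv.Perm (Fin k)) (a b c : Fin k) (hab : a < b) (hbc : b < c) :
    Ok (Gc F β a b (prefInput k n σ a b)) (Gc F β a c (prefInput k n σ a c))
       (Gc F β b c (prefInput k n σ b c)) := by
  rcases htri a b c hab hbc with ⟨m, s, h1, h2, h3⟩ | ⟨h1, h2⟩ | ⟨h1, h2⟩ | ⟨h1, h2⟩ | ⟨h1, h2⟩ | ⟨h1, h2⟩ | ⟨h1, h2⟩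
  · rw [Gc_of_dct hβ h1, Gc_of_dct hβ h2, Gc_of_dct hβ h3]
    have e1 : dict n m s (prefInput k n σ a b) = xor (decide (σ m a < σ m b)) s := rfl
    have e2 : dict n m s (prefInput k n σ a c) = xor (decide (σ m a < σ m c)) s := rfl
    have e3 : dict n m s (prefInput k n σ b c) = xor (decide (σ m b < σ m c)) s := rfl
    rw [e1, e2, e3]
    exact ok_xor s _ _ _ (ok_decide (σ m a) (σ m b) (σ m c))
  · rw [Gc_of_pinA h1, Gc_of_pinA h2]
    have : ∀ x : Bool, Ok true true x := by decide
    exact this _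
  · rw [Gc_of_pinB hβ h1, Gc_of_pinB hβ h2]
    have : ∀ x : Bool, Ok false false x := by decide
    exact this _
  · rw [Gc_of_pinB hβ h1, Gc_of_pinA h2]
    have : ∀ x : Bool, Ok false x true := by decide
    exact this _
  · rw [Gc_of_pinA h1, Gc_of_pinB hβ h2]
    have : ∀ x : Bool, Ok true x false := by decide
    exact this _
  · rw [Gc_of_pinA h1, Gc_of_pinA h2]
    have : ∀ x : Bool, Ok x true true := by decide
    exact this _
  · rw [Gc_of_pinB hβ h1, Gc_of_pinB hβ h2]
    have : ∀ x : Bool, Ok x false false := by decide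
    exact this _

lemma Gc_transitive (hβ : β < 1/4)
    (htri : ∀ i j l : Fin k, i < j → j < l →
      (∃ m s, Dct F β i j m s ∧ Dct F β i l m s ∧ Dct F β j l m s)
      ∨ (PinA F β i j ∧ PinA F β i l)
      ∨ (PinB F β i j ∧ PinB F β i l)
      ∨ (PinB F β i j ∧ PinA F β j l)
      ∨ (PinA F β i j ∧ PinB F β j l)
      ∨ (PinA F β i l ∧ PinA F β j l)
      ∨ (PinB F β i l ∧ PinB F β j l)) :
    ∀ σ, TransOutcome k n (Gc F β) σ := by
  intro σ
  classical
  set vals : Fin k → Fin k → Bool := fun i j => Gc F β i j (prefInput k n σ i j) with hvals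
  set soc : Fin k → Fin k → Prop :=
    fun i j => (i < j ∧ vals i j = true) ∨ (j < i ∧ vals j i = false) with hsoc
  have key : ∀ a b c : Fin k, a < b → b < c → Ok (vals a b) (vals a c) (vals b c) :=
    fun a b c hab hbc => Gc_ok hβ htri σ a b c hab hbc
  have hirr : ∀ a, ¬ soc a a := by
    rintro a (⟨h, _⟩ | ⟨h, _⟩) <;> exact lt_irrefl a h
  have htot : ∀ a b, a ≠ b → soc a b ∨ soc b a := by
    intro a b hne
    rcases lt_or_gt_of_ne hne with h | h
    · cases hv : vals a b
      · exact Or.inr (Or.inr ⟨h, hv⟩)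
      · exact Or.inl (Or.inl ⟨h, hv⟩)
    · cases hv : vals b a
      · exact Or.inl (Or.inr ⟨h, hv⟩)
      · exact Or.inr (Or.inl ⟨h, hv⟩)
  have htrans : ∀ i j l, soc i j → soc j l → soc i l := by
    intro i j l h1 h2
    have okTxT : ∀ x : Bool, Ok true x true → x = true := by decide
    have okxTF : ∀ x : Bool, Ok x true false → x = true := by decide
    have okxFT : ∀ x : Bool, Ok x false true → x = false := by decide
    have okFTx : ∀ x : Bool, Ok false true x → x = true := by decide
    have okTFx : ∀ x : Bool, Ok true false x → x = false := by decide
    have okFxF : ∀ x : Bool, Ok false x false → x = false := by decide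
    rcases h1 with ⟨hij, e1⟩ | ⟨hji, e1⟩ <;> rcases h2 with ⟨hjl, e2⟩ | ⟨hlj, e2⟩
    · -- i<j, j<l
      have hil : i < l := lt_trans hij hjl
      have := key i j l hij hjl
      rw [e1, e2] at this
      exact Or.inl ⟨hil, okTxT _ this⟩
    · -- i<j, l<j
      rcases lt_trichotomy i l with hil | rfl | hli
      · have := key i l j hil hlj
        rw [e1, e2] at this
        exact Or.inl ⟨hil, okxTF _ this⟩
      · rw [e1] at e2; exact absurd e2 (by simp)
      · have := key l i j hli hij
        rw [e1, e2] at this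
        exact Or.inr ⟨hli, okxFT _ this⟩
    · -- j<i, j<l
      rcases lt_trichotomy i l with hil | rfl | hli
      · have := key j i l hji hil
        rw [e1, e2] at this
        exact Or.inl ⟨hil, okFTx _ this⟩
      · rw [e1] at e2; exact absurd e2 (by simp)
      · have := key j l i hjl hli
        rw [e1, e2] at this
        exact Or.inr ⟨hli, okTFx _ this⟩
    · -- j<i, l<j
      have hli : l < i := lt_trans hlj hji
      have := key l j i hlj hji
      rw [e1, e2] at this
      exact Or.inr ⟨hli, okFxF _ this⟩
  obtain ⟨π0, hπ0⟩ := exists_perm_order soc hirr htot htrans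
  set π : Equiv.Perm (Fin k) := π0.trans (finCongr (by simp)) with hπ
  have hspec : ∀ a b, soc a b ↔ π a < π b := by
    intro a b
    rw [hπ0 a b]
    constructor
    · intro h; exact h
    · intro h; exact h
  refine ⟨π, fun i j hij => ?_⟩
  cases hv : Gc F β i j (prefInput k n σ i j)
  · have hns : ¬ soc i j := by
      rintro (⟨_, h⟩ | ⟨h, _⟩)
      · have h' : Gc F β i j (prefInput k n σ i j) = true := h
        rw [hv] at h'
        exact absurd h' (by simp)
      · exact absurd hij (lt_asymm h)
    rw [hspec] at hns
    simp [hns]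
  · have hs : soc i j := Or.inl ⟨hij, hv⟩
    rw [hspec] at hs
    simp [hs]

end MosselConstruction

/-- **Mossel's reduction lemma** (leveraging 3 alternatives to `k` alternatives).
If `δ₀ : (0,1] → (0,1]` is such that every IIA GSWF on three alternatives with
`P(F) ≤ δ₀(ε)` satisfies `D₁(F) ≤ ε`, then every IIA GSWF on `k ≥ 3` alternatives with
`P(F) ≤ δ₀(ε/k²)` satisfies `D₁(F) ≤ ε`. -/
theorem mossel_reduction (δ₀ : ℝ → ℝ)
    (hδ : ∀ ε : ℝ, 0 < ε → ε ≤ 1 → 0 < δ₀ ε ∧ δ₀ ε ≤ 1)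
    (h3 : ∀ (n : ℕ), 1 ≤ n → ∀ F : Fin 3 → Fin 3 → Cube n → Bool, ∀ ε : ℝ,
      0 < ε → ε ≤ 1 → PFk 3 n F ≤ δ₀ ε → D1k 3 n F ≤ ε) :
    ∀ (k n : ℕ), 3 ≤ k → 1 ≤ n → ∀ F : Fin k → Fin k → Cube n → Bool, ∀ ε : ℝ,
      0 < ε → ε ≤ 1 → PFk k n F ≤ δ₀ (ε / (k : ℝ) ^ 2) → D1k k n F ≤ ε := by
  intro k n hk hn F ε hε0 hε1 hP
  classical
  set β := ε / (k : ℝ) ^ 2 with hβdef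
  have hk3 : (3:ℝ) ≤ (k:ℝ) := by exact_mod_cast hk
  have hk2 : (9:ℝ) ≤ (k:ℝ)^2 := by nlinarith
  have hkpos : (0:ℝ) < (k:ℝ)^2 := by nlinarith
  have hβpos : 0 < β := div_pos hε0 hkpos
  have hβ19 : β ≤ 1/9 := by
    rw [hβdef, div_le_div_iff₀ hkpos (by norm_num)]
    nlinarith
  have hβ1 : β ≤ 1 := le_trans hβ19 (by norm_num)
  have hβ4 : β < 1/4 := lt_of_le_of_lt hβ19 (by norm_num)
  -- Step 1: extract near-minimizers for every ascending triple
  have hext : ∀ i j l : Fin k, i < j → j < l → ∃ G : Fin 3 → Fin 3 → Cube n → Bool,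
      (∀ σ, TransOutcome 3 n G σ) ∧ distk 3 n (tripleF F i j l) G ≤ β := by
    intro i j l hij hjl
    have hPF : PFk 3 n (tripleF F i j l) ≤ δ₀ β :=
      le_trans (PFk_triple_le hij hjl F) hP
    have hD1 := h3 n hn (tripleF F i j l) β hβpos hβ1 hPF
    have hSeq : { r : ℝ | ∃ G : Fin 3 → Fin 3 → Cube n → Bool,
        (∀ σ, TransOutcome 3 n G σ) ∧ r = distk 3 n (tripleF F i j l) G }
        = (fun G : Fin 3 → Fin 3 → Cube n → Bool => distk 3 n (tripleF F i j l) G) ''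
          { G | ∀ σ, TransOutcome 3 n G σ } := by
      ext r
      constructor
      · rintro ⟨G, hG, rfl⟩; exact ⟨G, hG, rfl⟩
      · rintro ⟨G, hG, rfl⟩; exact ⟨G, hG, rfl⟩
    have hfin : { r : ℝ | ∃ G : Fin 3 → Fin 3 → Cube n → Bool,
        (∀ σ, TransOutcome 3 n G σ) ∧ r = distk 3 n (tripleF F i j l) G }.Finite := by
      rw [hSeq]
      exact Set.Finite.image _ (Set.toFinite _)
    have hG0trans : ∀ σ, TransOutcome 3 n (fun a b => fun _ => decide (a < b)) σ := by
      intro σ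
      refine ⟨1, fun a b hab => ?_⟩
      simp
      rfl
    have hne : { r : ℝ | ∃ G : Fin 3 → Fin 3 → Cube n → Bool,
        (∀ σ, TransOutcome 3 n G σ) ∧ r = distk 3 n (tripleF F i j l) G }.Nonempty :=
      ⟨distk 3 n (tripleF F i j l) (fun a b => fun _ => decide (a < b)),
        ⟨(fun a b => fun _ => decide (a < b)), hG0trans, rfl⟩⟩
    have hmem := hne.csInf_mem hfin
    obtain ⟨G, hG, heq⟩ := hmem
    refine ⟨G, hG, ?_⟩
    rw [← heq]
    exact hD1
  have htri := fun i j l hij hjl => TRI F β hext i j l hij hjl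
  have htrans := Gc_transitive hβ4 htri
  have hdist : distk k n F (Gc F β) ≤ ε := by
    have h1 := distk_le_sum F (Gc F β)
    have h2 : ∑ p ∈ (univ.filter fun p : Fin k × Fin k => p.1 < p.2),
        distB n (F p.1 p.2) (Gc F β p.1 p.2)
        ≤ ∑ _p ∈ (univ.filter fun p : Fin k × Fin k => p.1 < p.2), β :=
      Finset.sum_le_sum (fun p _ => Gc_dist (le_of_lt hβpos) hβ4 p.1 p.2)
    rw [Finset.sum_const, nsmul_eq_mul] at h2
    have hcard : (((univ : Finset (Fin k × Fin k)).filter fun p => p.1 < p.2).card : ℝ)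
        ≤ (k:ℝ)^2 := by
      have hle := Finset.card_filter_le (univ : Finset (Fin k × Fin k)) (fun p => p.1 < p.2)
      have hcu : (univ : Finset (Fin k × Fin k)).card = k * k := by
        rw [Finset.card_univ, Fintype.card_prod, Fintype.card_fin]
      rw [hcu] at hle
      calc (((univ : Finset (Fin k × Fin k)).filter fun p => p.1 < p.2).card : ℝ)
          ≤ ((k * k : ℕ) : ℝ) := by exact_mod_cast hle
        _ = (k:ℝ)^2 := by push_cast; ring
    have h3' : (((univ : Finset (Fin k × Fin k)).filter fun p => p.1 < p.2).card : ℝ) * β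
        ≤ (k:ℝ)^2 * β := mul_le_mul_of_nonneg_right hcard (le_of_lt hβpos)
    have h4 : (k:ℝ)^2 * β = ε := by
      rw [hβdef, mul_comm, div_mul_cancel₀ ε (ne_of_gt hkpos)]
    linarith
  have hmemS : distk k n F (Gc F β) ∈ { r : ℝ | ∃ G : Fin k → Fin k → Cube n → Bool,
      (∀ σ, TransOutcome k n G σ) ∧ r = distk k n F G } := ⟨Gc F β, htrans, rfl⟩
  have hbdd : BddBelow { r : ℝ | ∃ G : Fin k → Fin k → Cube n → Bool,
      (∀ σ, TransOutcome k n G σ) ∧ r = distk k n F G } := by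
    refine ⟨0, fun r hr => ?_⟩
    obtain ⟨G, _, rfl⟩ := hr
    exact distk_nonneg F G
  exact le_trans (csInf_le hbdd hmemS) hdist

end
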